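/- Let (S, ⪯) be a connected standard discrete poset, let X₁, X₂, … be IID random variables on S with common PDF f having support S, and let Y₁, Y₂, … be the associated ladder variables. If for every y ∈ S the conditional distribution of Y₁ given Y₂ = y is uniform on D[y], i.e. P(Y₁ = x | Y₂ = y) = 1/#(D[y]) for every x ⪯ y, then f has constant rate: there is α > 0 with f(x) = α F(x) for all x ∈ S. -/

import Mathlib

set_option linter.unusedSectionVars false
set_option linter.unusedVariables false

open scoped ENNReal NNReal
open MeasureTheory ProbabilityTheory

/-- The upper probability function (UPF) of a density `f` on a discrete poset:
`F x = ∑_{t ⪰ x} f t`, computed in `[0,∞]`. -/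
noncomputable def upf {S : Type*} [PartialOrder S] (f : S → ℝ≥0) (x : S) : ℝ≥0∞ :=
  ∑' t : {t : S // x ≤ t}, (f t : ℝ≥0∞)

/-- The ladder times of a sequence `X₀, X₁, X₂, …`: `N₀ = 0` and
`N_{n+1} = min {m > N_n : X_m ⪰ X_{N_n}}` (indexed from `0`, so `ladderTime X n`
is the `(n+1)`-st ladder time of the paper). -/
noncomputable def ladderTime {Ω S : Type*} [PartialOrder S] (X : ℕ → Ω → S) :
    ℕ → Ω → ℕ
  | 0 => fun _ => 0
  | (n + 1) => fun ω =>
      sInf {m : ℕ | ladderTime X n ω < m ∧ X (ladderTime X n ω) ω ≤ X m ω}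

/-- The ladder variables: `Y_n = X_{N_n}` (indexed from `0`, so `ladderVar X n` is the
`(n+1)`-st ladder variable of the paper; in particular `ladderVar X 0 = Y₁` and
`ladderVar X 1 = Y₂`). -/
noncomputable def ladderVar {Ω S : Type*} [PartialOrder S] (X : ℕ → Ω → S)
    (n : ℕ) (ω : Ω) : S :=
  X (ladderTime X n ω) ω

section Aux

variable {S : Type*} [Countable S] [PartialOrder S] [MeasurableSpace S]
    [MeasurableSingletonClass S]
    {Ω : Type*} [MeasurableSpace Ω] (P : Measure Ω) [IsProbabilityMeasure P]
    (f : S → ℝ≥0) (X : ℕ → Ω → S)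

-- the event sets
def BmSet (X : ℕ → Ω → S) (x y : S) (m : ℕ) : Set Ω :=
  ⋂ i ∈ Finset.range (m + 1), X i ⁻¹'
    (if i = 0 then {x} else if i = m then {y} ∩ {t | x ≤ t} else {t | x ≤ t}ᶜ)

def CSet (X : ℕ → Ω → S) (x : S) : Set Ω :=
  X 0 ⁻¹' {x} ∩ ⋂ k, ⋂ (_ : 0 < k), X k ⁻¹' ({t | x ≤ t}ᶜ)

lemma BmSet_mem {x y : S} {m : ℕ} (hm : 0 < m) (ω : Ω) :
    ω ∈ BmSet X x y m ↔
      X 0 ω = x ∧ (∀ k, 0 < k → k < m → ¬ x ≤ X k ω) ∧ X m ω = y ∧ x ≤ X m ω := by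
  simp only [BmSet, Set.mem_iInter, Finset.mem_range, Set.mem_preimage]
  constructor
  · intro h
    have h0 := h 0 (by omega)
    rw [if_pos rfl] at h0
    have hmm := h m (by omega)
    rw [if_neg (by omega), if_pos rfl] at hmm
    refine ⟨h0, fun k hk hkm => ?_, hmm.1, hmm.2⟩
    have := h k (by omega)
    rw [if_neg (by omega), if_neg (by omega)] at this
    exact this
  · rintro ⟨h0, hmid, hm1, hm2⟩ i hi
    rcases eq_or_ne i 0 with rfl | hi0
    · simpa using h0
    rcases eq_or_ne i m with rfl | him
    · rw [if_neg hi0, if_pos rfl]; exact ⟨hm1, hm2⟩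
    · rw [if_neg hi0, if_neg him]
      exact hmid i (by omega) (by omega)

lemma CSet_mem {x : S} (ω : Ω) :
    ω ∈ CSet X x ↔ X 0 ω = x ∧ ∀ k, 0 < k → ¬ x ≤ X k ω := by
  simp [CSet]

end Aux

section Aux2

variable {S : Type*} [Countable S] [PartialOrder S] [MeasurableSpace S]
    [MeasurableSingletonClass S]
    {Ω : Type*} [MeasurableSpace Ω] {P : Measure Ω} [IsProbabilityMeasure P]
    {f : S → ℝ≥0} {X : ℕ → Ω → S}

lemma upf_eq_prob (hmeas : ∀ i, Measurable (X i))
    (hdist : ∀ i (x : S), P (X i ⁻¹' {x}) = (f x : ℝ≥0∞)) (i : ℕ) (x : S) :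
    P (X i ⁻¹' {t | x ≤ t}) = upf f x := by
  have hU : X i ⁻¹' {t | x ≤ t} = ⋃ t : {t : S // x ≤ t}, X i ⁻¹' {(t : S)} := by
    ext ω
    simp only [Set.mem_preimage, Set.mem_setOf_eq, Set.mem_iUnion, Set.mem_singleton_iff]
    exact ⟨fun h => ⟨⟨X i ω, h⟩, rfl⟩, fun ⟨t, ht⟩ => ht ▸ t.2⟩
  rw [hU, measure_iUnion, upf]
  · exact tsum_congr fun t => hdist i t
  · intro a b hab
    simp only [Function.onFun, Set.disjoint_left, Set.mem_preimage, Set.mem_singleton_iff]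
    intro ω h1 h2
    exact hab (Subtype.ext (h1 ▸ h2))
  · exact fun t => (hmeas i) (measurableSet_singleton _)

lemma P_BmSet (hmeas : ∀ i, Measurable (X i))
    (hindep : iIndepFun X P)
    (hdist : ∀ i (x : S), P (X i ⁻¹' {x}) = (f x : ℝ≥0∞))
    {x y : S} (hxy : x ≤ y) (j : ℕ) :
    P (BmSet X x y (j + 1)) = (f x : ℝ≥0∞) * (1 - upf f x) ^ j * f y := by
  classical
  set m := j + 1 with hm
  set q : ℝ≥0∞ := 1 - upf f x with hq
  have hUmeas : MeasurableSet {t : S | x ≤ t} := (Set.to_countable _).measurableSet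
  have hqP : ∀ i, P (X i ⁻¹' ({t : S | x ≤ t}ᶜ)) = q := by
    intro i
    rw [Set.preimage_compl, prob_compl_eq_one_sub ((hmeas i) hUmeas),
      upf_eq_prob hmeas hdist]
  have hyx : ({y} : Set S) ∩ {t | x ≤ t} = {y} := by
    apply Set.inter_eq_left.2
    intro t ht
    simp only [Set.mem_singleton_iff] at ht
    simpa [ht] using hxy
  have key := (iIndepFun_iff_measure_inter_preimage_eq_mul.1 hindep)
    (Finset.range (m + 1))
    (sets := fun i => if i = 0 then {x} else if i = m then {y} ∩ {t | x ≤ t}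
      else {t | x ≤ t}ᶜ) ?_
  · rw [BmSet, key]
    have hterm : ∀ i ∈ Finset.range (m + 1),
        P (X i ⁻¹' (if i = 0 then {x} else if i = m then ({y} : Set S) ∩ {t | x ≤ t}
          else {t | x ≤ t}ᶜ))
        = if i = 0 then (f x : ℝ≥0∞) else if i = m then (f y : ℝ≥0∞) else q := by
      intro i _
      rcases eq_or_ne i 0 with rfl | hi0
      · simp [hdist]
      rcases eq_or_ne i m with rfl | him
      · rw [if_neg hi0, if_pos rfl, if_neg hi0, if_pos rfl, hyx, hdist]
      · rw [if_neg hi0, if_neg him, if_neg hi0, if_neg him, hqP]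
    rw [Finset.prod_congr rfl hterm, Finset.prod_range_succ, if_neg (by omega), if_pos rfl]
    have hrest : ∀ i ∈ Finset.range m,
        (if i = 0 then (f x : ℝ≥0∞) else if i = m then (f y : ℝ≥0∞) else q)
          = if i = 0 then (f x : ℝ≥0∞) else q := by
      intro i hi
      simp only [Finset.mem_range] at hi
      rcases eq_or_ne i 0 with rfl | hi0
      · simp
      · rw [if_neg hi0, if_neg (by omega), if_neg hi0]
    rw [Finset.prod_congr rfl hrest,
      ← Finset.mul_prod_erase (Finset.range m) _ (a := 0) (Finset.mem_range.2 (by omega)),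
      if_pos rfl]
    have : ∀ i ∈ (Finset.range m).erase 0,
        (if i = 0 then (f x : ℝ≥0∞) else q) = q := by
      intro i hi
      rw [if_neg (Finset.ne_of_mem_erase hi)]
    rw [Finset.prod_congr rfl this, Finset.prod_const]
    have hcard : ((Finset.range m).erase 0).card = j := by
      rw [Finset.card_erase_of_mem (Finset.mem_range.2 (by omega)), Finset.card_range]
      omega
    rw [hcard]
  · intro i _
    rcases eq_or_ne i 0 with rfl | hi0
    · simp
    rcases eq_or_ne i m with rfl | him
    · rw [if_neg hi0, if_pos rfl]
      exact (measurableSet_singleton _).inter hUmeas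
    · rw [if_neg hi0, if_neg him]
      exact hUmeas.compl

lemma P_CSet (hmeas : ∀ i, Measurable (X i))
    (hindep : iIndepFun X P)
    (hdist : ∀ i (x : S), P (X i ⁻¹' {x}) = (f x : ℝ≥0∞))
    {x : S} (hFpos : 0 < upf f x) (hFle : upf f x ≤ 1) :
    P (CSet X x) = 0 := by
  classical
  set q : ℝ≥0∞ := 1 - upf f x with hq
  have hUmeas : MeasurableSet {t : S | x ≤ t} := (Set.to_countable _).measurableSet
  have hqP : ∀ i, P (X i ⁻¹' ({t : S | x ≤ t}ᶜ)) = q := by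
    intro i
    rw [Set.preimage_compl, prob_compl_eq_one_sub ((hmeas i) hUmeas),
      upf_eq_prob hmeas hdist]
  have hDn : ∀ n : ℕ, P (⋂ i ∈ Finset.range (n + 1),
      X i ⁻¹' (if i = 0 then ({x} : Set S) else {t | x ≤ t}ᶜ)) = (f x : ℝ≥0∞) * q ^ n := by
    intro n
    have key := (iIndepFun_iff_measure_inter_preimage_eq_mul.1 hindep)
      (Finset.range (n + 1))
      (sets := fun i => if i = 0 then ({x} : Set S) else {t | x ≤ t}ᶜ) ?_
    · rw [key]
      have hterm : ∀ i ∈ Finset.range (n + 1),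
          P (X i ⁻¹' (if i = 0 then ({x} : Set S) else {t | x ≤ t}ᶜ))
            = if i = 0 then (f x : ℝ≥0∞) else q := by
        intro i _
        rcases eq_or_ne i 0 with rfl | hi0
        · simp [hdist]
        · rw [if_neg hi0, if_neg hi0, hqP]
      rw [Finset.prod_congr rfl hterm,
        ← Finset.mul_prod_erase (Finset.range (n + 1)) _ (a := 0)
          (Finset.mem_range.2 (by omega)), if_pos rfl]
      have : ∀ i ∈ (Finset.range (n + 1)).erase 0,
          (if i = 0 then (f x : ℝ≥0∞) else q) = q := by
        intro i hi
        rw [if_neg (Finset.ne_of_mem_erase hi)]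
      rw [Finset.prod_congr rfl this, Finset.prod_const,
        Finset.card_erase_of_mem (Finset.mem_range.2 (by omega)), Finset.card_range]
      simp
    · intro i _
      rcases eq_or_ne i 0 with rfl | hi0
      · simp
      · rw [if_neg hi0]; exact hUmeas.compl
  have hsub : ∀ n : ℕ, CSet X x ⊆ ⋂ i ∈ Finset.range (n + 1),
      X i ⁻¹' (if i = 0 then ({x} : Set S) else {t | x ≤ t}ᶜ) := by
    intro n ω hω
    rw [CSet_mem] at hω
    simp only [Set.mem_iInter, Finset.mem_range, Set.mem_preimage]
    intro i _
    rcases eq_or_ne i 0 with rfl | hi0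
    · simpa using hω.1
    · rw [if_neg hi0]
      exact hω.2 i (by omega)
  have hle : ∀ n : ℕ, P (CSet X x) ≤ (f x : ℝ≥0∞) * q ^ n := by
    intro n
    rw [← hDn n]
    exact measure_mono (hsub n)
  have hqlt : q < 1 := by
    rw [hq]
    exact ENNReal.sub_lt_self ENNReal.one_ne_top one_ne_zero hFpos.ne'
  have htend : Filter.Tendsto (fun n : ℕ => (f x : ℝ≥0∞) * q ^ n)
      Filter.atTop (nhds 0) := by
    have h0 := ENNReal.tendsto_pow_atTop_nhds_zero_of_lt_one hqlt
    have := ENNReal.Tendsto.const_mul (a := (f x : ℝ≥0∞)) h0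
      (Or.inr ENNReal.coe_ne_top)
    simpa using this
  have := ge_of_tendsto' htend (fun n => hle n)
  exact le_antisymm this zero_le

end Aux2

lemma ennreal_mul_left_cancel {a b c : ℝ≥0∞} (h0 : a ≠ 0) (ht : a ≠ ⊤)
    (h : a * b = a * c) : b = c := by
  have := congrArg (fun z => a⁻¹ * z) h
  simpa [← mul_assoc, ENNReal.inv_mul_cancel h0 ht] using this

/-- Let `(S, ⪯)` be a connected standard discrete poset and let
`Y₁, Y₂, …` be the ladder variables of an IID sequence with common PDF `f` of support
`S`. If for every `y` the conditional distribution of `Y₁` given `Y₂ = y` is uniform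
on `D[y]`, then `f` has constant rate. -/
theorem constantRate_of_uniform_conditional
    {S : Type*} [Countable S] [PartialOrder S] [MeasurableSpace S]
    [MeasurableSingletonClass S]
    (hfin : ∀ x : S, {t : S | t ≤ x}.Finite)
    (hconn : ∀ x y : S, ∃ (n : ℕ) (c : ℕ → S), c 0 = x ∧ c n = y ∧
      ∀ i < n, c i ≤ c (i + 1) ∨ c (i + 1) ≤ c i)
    {Ω : Type*} [MeasurableSpace Ω] (P : Measure Ω) [IsProbabilityMeasure P]
    (f : S → ℝ≥0)
    (hsupp : ∀ x : S, 0 < f x)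
    (hpdf : ∑' x : S, (f x : ℝ≥0∞) = 1)
    (X : ℕ → Ω → S)
    (hmeas : ∀ i, Measurable (X i))
    (hindep : iIndepFun X P)
    (hdist : ∀ i (x : S), P (X i ⁻¹' {x}) = (f x : ℝ≥0∞))
    (hunif : ∀ y x : S, x ≤ y →
      P[{ω | ladderVar X 0 ω = x} | {ω | ladderVar X 1 ω = y}]
        = (Nat.card {t : S // t ≤ y} : ℝ≥0∞)⁻¹) :
    ∃ α : ℝ, 0 < α ∧ ∀ x : S, (f x : ℝ≥0∞) = ENNReal.ofReal α * upf f x := by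
  classical
  rcases isEmpty_or_nonempty S with hS | hS
  · exact ⟨1, one_pos, fun x => isEmptyElim x⟩
  -- basic facts about the UPF
  have hfleF : ∀ x : S, (f x : ℝ≥0∞) ≤ upf f x := fun x =>
    ENNReal.le_tsum (⟨x, le_rfl⟩ : {t : S // x ≤ t})
  have hFpos : ∀ x : S, 0 < upf f x := fun x =>
    lt_of_lt_of_le (ENNReal.coe_pos.2 (hsupp x)) (hfleF x)
  have hFle1 : ∀ x : S, upf f x ≤ 1 := by
    intro x
    rw [← upf_eq_prob hmeas hdist 0 x]
    exact prob_le_one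
  have hFne_top : ∀ x : S, upf f x ≠ ∞ := fun x =>
    (lt_of_le_of_lt (hFle1 x) ENNReal.one_lt_top).ne
  -- ladder time unfolding
  have hN1 : ∀ ω, ladderTime X 1 ω = sInf {m : ℕ | 0 < m ∧ X 0 ω ≤ X m ω} :=
    fun ω => rfl
  -- BmSet sits inside the ladder event
  have hBsub : ∀ (x y : S) (j : ℕ), BmSet X x y (j + 1) ⊆
      {ω | ladderVar X 1 ω = y} ∩ {ω | ladderVar X 0 ω = x} := by
    intro x y j ω hω
    rw [BmSet_mem X (by omega)] at hω
    obtain ⟨h0, hmid, hy, hxle⟩ := hω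
    have hNe : (j + 1) ∈ {m : ℕ | 0 < m ∧ X 0 ω ≤ X m ω} :=
      ⟨by omega, by rw [h0]; exact hxle⟩
    have hinf : sInf {m : ℕ | 0 < m ∧ X 0 ω ≤ X m ω} = j + 1 := by
      refine le_antisymm (Nat.sInf_le hNe) (le_of_not_gt fun h => ?_)
      have hmem := Nat.sInf_mem (⟨_, hNe⟩ : Set.Nonempty _)
      exact hmid _ hmem.1 h (h0 ▸ hmem.2)
    constructor
    · show ladderVar X 1 ω = y
      rw [ladderVar, hN1 ω, hinf]
      exact hy
    · exact h0
  -- the ladder event decomposes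
  have hEsub : ∀ (x y : S),
      {ω | ladderVar X 1 ω = y} ∩ {ω | ladderVar X 0 ω = x} ⊆
        (⋃ j, BmSet X x y (j + 1)) ∪ CSet X x := by
    intro x y ω hω
    obtain ⟨h2, h1⟩ := hω
    have h1' : X 0 ω = x := h1
    have h2' : ladderVar X 1 ω = y := h2
    by_cases hne : ({m : ℕ | 0 < m ∧ X 0 ω ≤ X m ω}).Nonempty
    · left
      have hmem := Nat.sInf_mem hne
      obtain ⟨hpos, hle⟩ := hmem
      refine Set.mem_iUnion.2 ⟨sInf {m : ℕ | 0 < m ∧ X 0 ω ≤ X m ω} - 1, ?_⟩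
      rw [BmSet_mem X (by omega)]
      have hxx : sInf {m : ℕ | 0 < m ∧ X 0 ω ≤ X m ω} - 1 + 1
          = sInf {m : ℕ | 0 < m ∧ X 0 ω ≤ X m ω} := by omega
    -- membership
      rw [hxx]
      refine ⟨h1', fun k hk hkm hxk => ?_, ?_, by rw [← h1']; exact hle⟩
      · have hkmem : k ∈ {m : ℕ | 0 < m ∧ X 0 ω ≤ X m ω} :=
          ⟨hk, by rw [h1']; exact hxk⟩
        exact absurd (Nat.sInf_le hkmem) (by omega)
      · rw [← h2', ladderVar, hN1 ω]
    · right
      rw [CSet_mem]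
      exact ⟨h1', fun k hk hxk =>
        hne ⟨k, Set.mem_setOf_eq ▸ ⟨hk, by rw [h1']; exact hxk⟩⟩⟩
  -- Bm sets are pairwise disjoint
  have hBdisj : ∀ x y : S, Pairwise (Function.onFun Disjoint fun j => BmSet X x y (j + 1)) := by
    have key : ∀ (x y : S) (i j : ℕ), i < j →
        Disjoint (BmSet X x y (i + 1)) (BmSet X x y (j + 1)) := by
      intro x y i j hij
      rw [Set.disjoint_left]
      intro ω h1 h2
      rw [BmSet_mem X (by omega)] at h1 h2
      exact h2.2.1 (i + 1) (by omega) (by omega) h1.2.2.2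
    intro x y
    intro i j hij
    rcases lt_or_gt_of_ne hij with h | h
    · exact key x y i j h
    · exact (key x y j i h).symm
  have hBmeasSet : ∀ (x y : S) (m : ℕ), MeasurableSet (BmSet X x y m) := by
    intro x y m
    refine Finset.measurableSet_biInter _ fun i _ => (hmeas i) ?_
    exact (Set.to_countable _).measurableSet
  have hCmeas : ∀ x : S, MeasurableSet (CSet X x) := by
    intro x
    refine ((hmeas 0) (measurableSet_singleton _)).inter ?_
    exact MeasurableSet.iInter fun k => MeasurableSet.iInter fun _ =>
      (hmeas k) (Set.to_countable _).measurableSet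
  -- the key probability computation
  have hPE : ∀ x y : S, x ≤ y →
      P ({ω | ladderVar X 1 ω = y} ∩ {ω | ladderVar X 0 ω = x})
        = (f x : ℝ≥0∞) * f y * (upf f x)⁻¹ := by
    intro x y hxy
    have hunion : P (⋃ j, BmSet X x y (j + 1))
        = (f x : ℝ≥0∞) * f y * (upf f x)⁻¹ := by
      rw [measure_iUnion (hBdisj x y) (fun j => hBmeasSet x y (j + 1))]
      have h1 : ∀ j : ℕ, P (BmSet X x y (j + 1))
          = ((f x : ℝ≥0∞) * f y) * (1 - upf f x) ^ j := by
        intro j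
        rw [P_BmSet hmeas hindep hdist hxy j]
        ring
      rw [tsum_congr h1, ENNReal.tsum_mul_left, ENNReal.tsum_geometric,
        ENNReal.sub_sub_cancel ENNReal.one_ne_top (hFle1 x)]
    refine le_antisymm ?_ (hunion ▸ measure_mono (Set.iUnion_subset (hBsub x y)))
    calc P ({ω | ladderVar X 1 ω = y} ∩ {ω | ladderVar X 0 ω = x})
        ≤ P ((⋃ j, BmSet X x y (j + 1)) ∪ CSet X x) := measure_mono (hEsub x y)
      _ ≤ P (⋃ j, BmSet X x y (j + 1)) + P (CSet X x) := measure_union_le _ _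
      _ = (f x : ℝ≥0∞) * f y * (upf f x)⁻¹ := by
          rw [P_CSet hmeas hindep hdist (hFpos x) (hFle1 x), add_zero, hunion]
  -- measurability of the conditioning event
  have hBmeasurable : ∀ y : S, MeasurableSet {ω | ladderVar X 1 ω = y} := by
    intro y
    have hdecomp : {ω | ladderVar X 1 ω = y} =
        ⋃ x : S, ((⋃ j, BmSet X x y (j + 1)) ∪ (if x = y then CSet X x else ∅)) := by
      ext ω
      simp only [Set.mem_setOf_eq, Set.mem_iUnion, Set.mem_union]
      constructor
      · intro h
        refine ⟨X 0 ω, ?_⟩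
        have hmem : ω ∈ ({ω' | ladderVar X 1 ω' = y} ∩ {ω' | ladderVar X 0 ω' = X 0 ω}) :=
          ⟨h, rfl⟩
        rcases hEsub (X 0 ω) y hmem with hc | hc
        · exact Or.inl (by simpa using hc)
        · right
          rw [CSet_mem] at hc
          have hM : {m : ℕ | 0 < m ∧ X 0 ω ≤ X m ω} = ∅ := by
            ext k
            simp only [Set.mem_setOf_eq, Set.mem_empty_iff_false, iff_false, not_and]
            exact fun hk => hc.2 k hk
          have hxy : X 0 ω = y := by
            have hN : ladderTime X 1 ω = 0 := by
              rw [hN1 ω, hM, Nat.sInf_empty]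
            rw [← h, ladderVar, hN]
          rw [if_pos hxy]
          rw [CSet_mem]
          exact hc
      · rintro ⟨x, h | h⟩
        · obtain ⟨j, hj⟩ := Set.mem_iUnion.1 (by exact Set.mem_iUnion.2 h)
          exact (hBsub x y j hj).1
        · rcases eq_or_ne x y with rfl | hne
          · rw [if_pos rfl, CSet_mem] at h
            have hM : {m : ℕ | 0 < m ∧ X 0 ω ≤ X m ω} = ∅ := by
              ext k
              simp only [Set.mem_setOf_eq, Set.mem_empty_iff_false, iff_false, not_and]
              intro hk hle
              exact h.2 k hk (h.1 ▸ hle)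
            have hN : ladderTime X 1 ω = 0 := by
              rw [hN1 ω, hM, Nat.sInf_empty]
            show ladderVar X 1 ω = x
            rw [ladderVar, hN, h.1]
          · rw [if_neg hne] at h
            exact absurd h (Set.notMem_empty ω)
    rw [hdecomp]
    refine MeasurableSet.iUnion fun x => MeasurableSet.union
      (MeasurableSet.iUnion fun j => hBmeasSet x y (j + 1)) ?_
    split_ifs
    · exact hCmeas x
    · exact MeasurableSet.empty
  -- constant rate on comparable pairs
  have hrate : ∀ x y : S, x ≤ y →
      (f x : ℝ≥0∞) * (upf f x)⁻¹ = (f y : ℝ≥0∞) * (upf f y)⁻¹ := by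
    intro x y hxy
    have h1 := hunif y x hxy
    have h2 := hunif y y le_rfl
    rw [cond_apply (hBmeasurable y), hPE x y hxy] at h1
    rw [cond_apply (hBmeasurable y), hPE y y le_rfl] at h2
    have hPBpos : P {ω | ladderVar X 1 ω = y} ≠ 0 := by
      refine fun h0 => ?_
      have hle : P ({ω | ladderVar X 1 ω = y} ∩ {ω | ladderVar X 0 ω = y})
          ≤ P {ω | ladderVar X 1 ω = y} := measure_mono Set.inter_subset_left
      rw [hPE y y le_rfl, h0, nonpos_iff_eq_zero] at hle
      have : (f y : ℝ≥0∞) * f y * (upf f y)⁻¹ ≠ 0 := by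
        refine mul_ne_zero (mul_ne_zero ?_ ?_) (ENNReal.inv_ne_zero.2 (hFne_top y)) <;>
          exact ENNReal.coe_ne_zero.2 (hsupp y).ne'
      exact this hle
    have hPBne_top : P {ω | ladderVar X 1 ω = y} ≠ ∞ := measure_ne_top P _
    have hkey : (f x : ℝ≥0∞) * f y * (upf f x)⁻¹
        = (f y : ℝ≥0∞) * f y * (upf f y)⁻¹ := by
      have h3 := h1.trans h2.symm
      exact ennreal_mul_left_cancel (ENNReal.inv_ne_zero.2 hPBne_top)
        (ENNReal.inv_ne_top.2 hPBpos) h3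
    have h4 : (f y : ℝ≥0∞) * ((f x : ℝ≥0∞) * (upf f x)⁻¹)
        = (f y : ℝ≥0∞) * ((f y : ℝ≥0∞) * (upf f y)⁻¹) := by
      calc (f y : ℝ≥0∞) * ((f x : ℝ≥0∞) * (upf f x)⁻¹)
          = (f x : ℝ≥0∞) * f y * (upf f x)⁻¹ := by ring
        _ = (f y : ℝ≥0∞) * f y * (upf f y)⁻¹ := hkey
        _ = (f y : ℝ≥0∞) * ((f y : ℝ≥0∞) * (upf f y)⁻¹) := by ring
    exact ennreal_mul_left_cancel (ENNReal.coe_ne_zero.2 (hsupp y).ne')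
      ENNReal.coe_ne_top h4
  -- constant rate globally, via connectedness
  have hconst : ∀ x y : S,
      (f x : ℝ≥0∞) * (upf f x)⁻¹ = (f y : ℝ≥0∞) * (upf f y)⁻¹ := by
    intro x y
    obtain ⟨n, c, hc0, hcn, hstep⟩ := hconn x y
    have hchain : ∀ i ≤ n,
        (f (c 0) : ℝ≥0∞) * (upf f (c 0))⁻¹ = (f (c i) : ℝ≥0∞) * (upf f (c i))⁻¹ := by
      intro i hi
      induction i with
      | zero => rfl
      | succ k ih =>
        have hk := ih (by omega)
        rcases hstep k (by omega) with h | h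
        · exact hk.trans (hrate _ _ h)
        · exact hk.trans (hrate _ _ h).symm
    rw [← hc0, ← hcn]
    exact hchain n le_rfl
  -- conclude
  obtain ⟨x₀⟩ := hS
  have hα'ne0 : (f x₀ : ℝ≥0∞) * (upf f x₀)⁻¹ ≠ 0 :=
    mul_ne_zero (ENNReal.coe_ne_zero.2 (hsupp x₀).ne')
      (ENNReal.inv_ne_zero.2 (hFne_top x₀))
  have hα'netop : (f x₀ : ℝ≥0∞) * (upf f x₀)⁻¹ ≠ ∞ :=
    ENNReal.mul_ne_top ENNReal.coe_ne_top (ENNReal.inv_ne_top.2 (hFpos x₀).ne')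
  refine ⟨((f x₀ : ℝ≥0∞) * (upf f x₀)⁻¹).toReal,
    ENNReal.toReal_pos hα'ne0 hα'netop, fun x => ?_⟩
  rw [ENNReal.ofReal_toReal hα'netop, hconst x₀ x, mul_assoc,
    ENNReal.inv_mul_cancel (hFpos x).ne' (hFne_top x), mul_one]
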